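/- For every q ≥ 2 there exists a graph G on 3(q+1) vertices that is the edge-disjoint union of q+1 spanning trees and has three vertices u₀, v₀, w₀ spanning a triangle such that each of u₀, v₀, w₀ has degree exactly q+2 in G. -/

import Mathlib

open SimpleGraph Walk

section TreeLemma
variable {V : Type*} [DecidableEq V] {P : V → V} {r : V} {rank : V → ℕ}

private lemma parent_dichot (hfix : ∀ v, P v = v ↔ v = r)
    (hrank : ∀ v, v ≠ r → rank (P v) < rank v) {a b : V}
    (h : (SimpleGraph.fromRel (fun x y => P x = y)).Adj a b) :
    (P a = b ∧ rank b < rank a) ∨ (P b = a ∧ rank a < rank b) := by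
  rw [fromRel_adj] at h
  obtain ⟨hne, hor⟩ := h
  rcases hor with h1 | h1
  · left
    refine ⟨h1, ?_⟩
    have har : a ≠ r := by
      intro h'; rw [(hfix a).mpr h'] at h1; exact hne h1
    simpa [h1] using hrank a har
  · right
    refine ⟨h1, ?_⟩
    have hbr : b ≠ r := by
      intro h'; rw [(hfix b).mpr h'] at h1; exact hne h1.symm
    simpa [h1] using hrank b hbr

private lemma parent_low (hfix : ∀ v, P v = v ↔ v = r)
    (hrank : ∀ v, v ≠ r → rank (P v) < rank v) {a b : V}
    (h : (SimpleGraph.fromRel (fun x y => P x = y)).Adj a b)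
    (hr : rank b < rank a) : P a = b := by
  rcases parent_dichot hfix hrank h with ⟨h1, _⟩ | ⟨_, h2⟩
  · exact h1
  · omega

private lemma parent_connected (hfix : ∀ v, P v = v ↔ v = r)
    (hrank : ∀ v, v ≠ r → rank (P v) < rank v) :
    (SimpleGraph.fromRel (fun x y => P x = y)).Connected := by
  set G := SimpleGraph.fromRel (fun x y => P x = y) with hG
  haveI : Nonempty V := ⟨r⟩
  have key : ∀ N v, rank v ≤ N → G.Reachable v r := by
    intro N
    induction N with
    | zero =>
      intro v hv
      by_cases hvr : v = r
      · rw [hvr]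
      · exact absurd (hrank v hvr) (by omega)
    | succ n ih =>
      intro v hv
      by_cases hvr : v = r
      · rw [hvr]
      · have hPv : P v ≠ v := fun h => hvr ((hfix v).mp h)
        have hadj : G.Adj v (P v) := by
          rw [hG, fromRel_adj]
          exact ⟨Ne.symm hPv, Or.inl rfl⟩
        have := hrank v hvr
        exact (hadj.reachable).trans (ih (P v) (by omega))
  refine ⟨fun u v => ?_⟩
  exact (key (rank u) u le_rfl).trans (key (rank v) v le_rfl).symm

private lemma parent_cycle_max {x₀ : V} (hfix : ∀ v, P v = v ↔ v = r)
    (hrank : ∀ v, v ≠ r → rank (P v) < rank v)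
    (c : (SimpleGraph.fromRel (fun x y => P x = y)).Walk x₀ x₀) (hc' : c.IsCycle)
    (hsup : ∀ y ∈ c.support, rank y ≤ rank x₀) : False := by
  cases c with
  | nil => exact hc'.ne_nil rfl
  | @cons _ v _ h p =>
    obtain ⟨w, q, h', hcat⟩ := exists_cons_eq_concat h p
    have hvmem : v ∈ (cons h p).support := by simp
    have hwmem : w ∈ (cons h p).support := by
      rw [hcat]
      exact Walk.mem_support_iff_exists_append.mpr ⟨q, cons h' nil, by rw [← concat_eq_append]⟩
    have hrv : rank v < rank x₀ := by
      rcases parent_dichot hfix hrank h with ⟨_, h2⟩ | ⟨h1, _⟩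
      · exact h2
      · have := hsup v hvmem; omega
    have hrw : rank w < rank x₀ := by
      rcases parent_dichot hfix hrank h'.symm with ⟨_, h2⟩ | ⟨h1, _⟩
      · exact h2
      · have := hsup w hwmem; omega
    have hv : P x₀ = v := parent_low hfix hrank h hrv
    have hw : P x₀ = w := parent_low hfix hrank h'.symm hrw
    have hedges : (cons h p).edges = q.edges ++ [s(w, x₀)] := by
      rw [hcat, edges_concat, List.concat_eq_append]
    have hnodup : ((cons h p).edges).Nodup := hc'.isTrail.edges_nodup
    have hlen : 3 ≤ (cons h p).length := hc'.three_le_length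
    rw [edges_cons] at hedges hnodup
    have hee : s(w, x₀) = s(x₀, v) := by rw [← hv, hw]; exact Sym2.eq_swap
    rw [hee] at hedges
    rcases List.eq_nil_or_concat q.edges with hq | ⟨l, e, hql⟩
    · rw [hq] at hedges
      simp only [List.nil_append] at hedges
      have hpe : p.edges = [] := (List.cons.injEq _ _ _ _ ▸ hedges).2
      have hp0 : p.length = 0 := by
        have := p.length_edges; rw [hpe] at this; simpa using this.symm
      simp only [Walk.length_cons] at hlen
      omega
    · rw [hql] at hedges
      have hmem : s(x₀, v) ∈ p.edges := by
        have h1 := congrArg List.tail hedges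
        simp only [List.tail_cons] at h1
        rw [List.tail_append_of_ne_nil (by simp)] at h1
        rw [h1]
        simp
      simp only [List.nodup_cons] at hnodup
      exact hnodup.1 hmem

private lemma parent_acyclic (hfix : ∀ v, P v = v ↔ v = r)
    (hrank : ∀ v, v ≠ r → rank (P v) < rank v) :
    (SimpleGraph.fromRel (fun x y => P x = y)).IsAcyclic := by
  intro u c hc
  have hne : List.argmax rank c.support ≠ none :=
    fun h => c.support_ne_nil (List.argmax_eq_none.mp h)
  obtain ⟨x₀, hx₀⟩ := Option.ne_none_iff_exists'.mp hne
  have hx₀mem : x₀ ∈ c.support := List.argmax_mem hx₀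
  have hmax : ∀ y ∈ c.support, rank y ≤ rank x₀ :=
    fun y hy => List.le_of_mem_argmax hy hx₀
  refine parent_cycle_max hfix hrank (c.rotate x₀ hx₀mem) (hc.rotate hx₀mem) ?_
  intro y hy
  rw [(c.rotate x₀ hx₀mem).support_eq_cons] at hy
  rcases List.mem_cons.mp hy with rfl | hy
  · exact le_rfl
  · have h2 : y ∈ c.support.tail := ((support_rotate c x₀ hx₀mem).mem_iff).mp hy
    exact hmax y (c.support_eq_cons ▸ List.mem_cons_of_mem _ h2)

/-- A graph given by a parent function with strictly decreasing rank is a tree. -/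
lemma parent_isTree (hfix : ∀ v, P v = v ↔ v = r)
    (hrank : ∀ v, v ≠ r → rank (P v) < rank v) :
    (SimpleGraph.fromRel (fun x y => P x = y)).IsTree :=
  ⟨parent_connected hfix hrank, parent_acyclic hfix hrank⟩

end TreeLemma


namespace Stmt5Aux

/-- offset of spine label `x` from `k`, cyclically mod `3q` (all in ℕ). -/
def tOf (q k x : ℕ) : ℕ := if k ≤ x then x - k else x + 3*q - k

/-- parent spine label of spine label `x` in tree `k` (valid when `tOf q k x ≠ 0`). -/
def parLab (q k x : ℕ) : ℕ :=
  if tOf q k x ≤ 3*q/2 then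
    (if tOf q k x - 1 ≤ k then k - (tOf q k x - 1) else k + 3*q - (tOf q k x - 1))
  else k + (3*q - tOf q k x)

/-- rank of a vertex with `val = w` in tree `k`. -/
def rkLab (q k w : ℕ) : ℕ :=
  if w < 3 then (if w = k then 6*q+1 else 6*q)
  else (if tOf q k (w-3) ≤ 3*q/2 then 2*(tOf q k (w-3)) - 1
        else 2*(3*q - tOf q k (w-3)))

lemma tOf_lt (q k x : ℕ) (hq : 2 ≤ q) (hk : k ≤ q) (hx : x < 3*q) : tOf q k x < 3*q := by
  unfold tOf; split_ifs <;> omega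

lemma tOf_eq_zero (q k x : ℕ) (hq : 2 ≤ q) (hk : k ≤ q) (hx : x < 3*q) :
    tOf q k x = 0 ↔ x = k := by
  unfold tOf; split_ifs <;> omega

lemma parLab_lt (q k x : ℕ) (hq : 2 ≤ q) (hk : k ≤ q) (hx : x < 3*q) :
    parLab q k x < 3*q := by
  unfold parLab tOf; split_ifs <;> omega

lemma parLab_ne (q k x : ℕ) (hq : 2 ≤ q) (hk : k ≤ q) (hx : x < 3*q)
    (ht : tOf q k x ≠ 0) : parLab q k x ≠ x := by
  unfold parLab tOf at *; split_ifs at * <;> omega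

lemma spine_sum (q k x : ℕ) (hq : 2 ≤ q) (hk : k ≤ q) (hx : x < 3*q)
    (ht : tOf q k x ≠ 0) :
    x + parLab q k x = 2*k ∨ x + parLab q k x = 2*k+1 ∨
    x + parLab q k x = 2*k+3*q ∨ x + parLab q k x = 2*k+1+3*q := by
  unfold parLab tOf at *; split_ifs at * <;> omega

lemma spine_rank (q k x : ℕ) (hq : 2 ≤ q) (hk : k ≤ q) (hx : x < 3*q)
    (ht : tOf q k x ≠ 0) :
    (if tOf q k (parLab q k x) ≤ 3*q/2 then 2*(tOf q k (parLab q k x)) - 1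
     else 2*(3*q - tOf q k (parLab q k x)))
    < (if tOf q k x ≤ 3*q/2 then 2*(tOf q k x) - 1 else 2*(3*q - tOf q k x)) := by
  unfold parLab tOf at *; split_ifs at * <;> omega

end Stmt5Aux

namespace Stmt5Aux

def par (q : ℕ) (hq : 2 ≤ q) (k : Fin (q + 1)) (v : Fin (3 * (q + 1))) : Fin (3 * (q + 1)) :=
  if v.val < 3 then
    (if v.val = k.val then ⟨(v.val + 1) % 3, by omega⟩
     else ⟨3 + k.val, by have := k.isLt; omega⟩)
  else if tOf q k.val (v.val - 3) = 0 then v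
  else ⟨3 + parLab q k.val (v.val - 3), by
    have := parLab_lt q k.val (v.val - 3) hq (by have := k.isLt; omega)
      (by have := v.isLt; omega); omega⟩

lemma par_val (q : ℕ) (hq : 2 ≤ q) (k : Fin (q + 1)) (v : Fin (3 * (q + 1))) :
    (par q hq k v).val =
      if v.val < 3 then
        (if v.val = k.val then (v.val + 1) % 3 else 3 + k.val)
      else if tOf q k.val (v.val - 3) = 0 then v.val
      else 3 + parLab q k.val (v.val - 3) := by
  unfold par; split_ifs <;> rfl

def root (q : ℕ) (hq : 2 ≤ q) (k : Fin (q + 1)) : Fin (3 * (q + 1)) :=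
  ⟨3 + k.val, by have := k.isLt; omega⟩

lemma par_fix (q : ℕ) (hq : 2 ≤ q) (k : Fin (q + 1)) (v : Fin (3 * (q + 1))) :
    par q hq k v = v ↔ v = root q hq k := by
  have hk := k.isLt
  have hv := v.isLt
  rw [Fin.ext_iff, Fin.ext_iff, par_val, root]
  by_cases h3 : v.val < 3
  · rw [if_pos h3]
    split_ifs with he
    · constructor
      · intro h; omega
      · intro h; simp at h; omega
    · constructor
      · intro h; omega
      · intro h; simp at h; omega
  · rw [if_neg h3]
    have hx : v.val - 3 < 3*q := by omega
    have hzero := tOf_eq_zero q k.val (v.val - 3) hq (by omega) hx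
    split_ifs with ht
    · simp only [true_iff]
      have : v.val - 3 = k.val := hzero.mp ht
      omega
    · have hne := parLab_ne q k.val (v.val - 3) hq (by omega) hx ht
      constructor
      · intro h; omega
      · intro h
        simp at h
        exfalso
        apply ht
        rw [hzero]
        omega

lemma par_rank (q : ℕ) (hq : 2 ≤ q) (k : Fin (q + 1)) (v : Fin (3 * (q + 1)))
    (hvr : v ≠ root q hq k) :
    rkLab q k.val (par q hq k v).val < rkLab q k.val v.val := by
  have hk := k.isLt
  have hv := v.isLt
  have hvr' : v.val ≠ 3 + k.val := fun h => hvr (Fin.ext h)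
  rw [par_val]
  by_cases h3 : v.val < 3
  · rw [if_pos h3]
    split_ifs with he
    · -- parent is (v+1)%3, a special vertex different from k
      have h1 : (v.val + 1) % 3 < 3 := by omega
      rw [rkLab, rkLab, if_pos h1, if_pos h3, if_pos he, if_neg (by omega)]
      omega
    · -- parent is the root
      have hr3 : ¬ (3 + k.val < 3) := by omega
      rw [rkLab, rkLab, if_neg hr3, if_pos h3, if_neg he]
      have : tOf q k.val (3 + k.val - 3) = 0 := by
        rw [tOf_eq_zero q k.val _ hq (by omega) (by omega)]; omega
      rw [this]
      simp
      omega
  · rw [if_neg h3]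
    have hx : v.val - 3 < 3*q := by omega
    have ht : tOf q k.val (v.val - 3) ≠ 0 := by
      intro h
      rw [tOf_eq_zero q k.val _ hq (by omega) hx] at h
      omega
    rw [if_neg ht]
    have hp3 : ¬ (3 + parLab q k.val (v.val - 3) < 3) := by omega
    rw [rkLab, rkLab, if_neg hp3, if_neg h3]
    have hsimp : 3 + parLab q k.val (v.val - 3) - 3 = parLab q k.val (v.val - 3) := by omega
    rw [hsimp]
    exact spine_rank q k.val (v.val - 3) hq (by omega) hx ht

def T (q : ℕ) (hq : 2 ≤ q) (k : Fin (q + 1)) : SimpleGraph (Fin (3 * (q + 1))) :=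
  SimpleGraph.fromRel (fun a b => par q hq k a = b)

lemma T_isTree (q : ℕ) (hq : 2 ≤ q) (k : Fin (q + 1)) : (T q hq k).IsTree :=
  parent_isTree (r := root q hq k) (rank := fun v => rkLab q k.val v.val)
    (par_fix q hq k) (par_rank q hq k)

end Stmt5Aux

namespace Stmt5Aux

lemma par_char (q : ℕ) (hq : 2 ≤ q) (k : Fin (q + 1)) {x y : Fin (3 * (q + 1))}
    (hpar : par q hq k x = y) (hne : x ≠ y) :
    (x.val < 3 ∧ y.val < 3 ∧ k.val < 3 ∧ x.val = k.val ∧ y.val = (k.val + 1) % 3)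
  ∨ (x.val < 3 ∧ x.val ≠ k.val ∧ y.val = 3 + k.val)
  ∨ (3 ≤ x.val ∧ 3 ≤ y.val ∧
      ((x.val - 3) + (y.val - 3) = 2 * k.val ∨ (x.val - 3) + (y.val - 3) = 2 * k.val + 1 ∨
       (x.val - 3) + (y.val - 3) = 2 * k.val + 3 * q ∨
       (x.val - 3) + (y.val - 3) = 2 * k.val + 1 + 3 * q)) := by
  have hk := k.isLt
  have hxv := x.isLt
  have hval := congrArg Fin.val hpar
  rw [par_val] at hval
  have hnev : x.val ≠ y.val := fun h => hne (Fin.ext h)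
  by_cases h3 : x.val < 3
  · rw [if_pos h3] at hval
    split_ifs at hval with he
    · left; refine ⟨h3, by omega, by omega, he, by omega⟩
    · right; left; exact ⟨h3, he, hval.symm⟩
  · rw [if_neg h3] at hval
    have hx : x.val - 3 < 3 * q := by omega
    have ht : tOf q k.val (x.val - 3) ≠ 0 := by
      intro h0
      rw [h0, if_pos rfl] at hval
      have hval' := hval
      exact hnev hval'
    rw [if_neg ht] at hval
    right; right
    have hsum := spine_sum q k.val (x.val - 3) hq (by omega) hx ht
    have hy3 : y.val = 3 + parLab q k.val (x.val - 3) := hval.symm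
    refine ⟨by omega, by omega, ?_⟩
    rcases hsum with h | h | h | h <;> omega

lemma adj_char (q : ℕ) (hq : 2 ≤ q) (k : Fin (q + 1)) {a b : Fin (3 * (q + 1))}
    (h : (T q hq k).Adj a b) :
    (a.val < 3 ∧ b.val < 3 ∧ k.val < 3 ∧
      ((a.val = k.val ∧ b.val = (k.val + 1) % 3) ∨ (b.val = k.val ∧ a.val = (k.val + 1) % 3)))
  ∨ (a.val < 3 ∧ a.val ≠ k.val ∧ b.val = 3 + k.val)
  ∨ (b.val < 3 ∧ b.val ≠ k.val ∧ a.val = 3 + k.val)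
  ∨ (3 ≤ a.val ∧ 3 ≤ b.val ∧
      ((a.val - 3) + (b.val - 3) = 2 * k.val ∨ (a.val - 3) + (b.val - 3) = 2 * k.val + 1 ∨
       (a.val - 3) + (b.val - 3) = 2 * k.val + 3 * q ∨
       (a.val - 3) + (b.val - 3) = 2 * k.val + 1 + 3 * q)) := by
  rw [T, SimpleGraph.fromRel_adj] at h
  obtain ⟨hne, hor | hor⟩ := h
  · rcases par_char q hq k hor hne with ⟨h1, h2, h3, h4, h5⟩ | ⟨h1, h2, h3⟩ | ⟨h1, h2, h3⟩
    · exact Or.inl ⟨h1, h2, h3, Or.inl ⟨h4, h5⟩⟩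
    · exact Or.inr (Or.inl ⟨h1, h2, h3⟩)
    · exact Or.inr (Or.inr (Or.inr ⟨h1, h2, h3⟩))
  · rcases par_char q hq k hor (Ne.symm hne) with ⟨h1, h2, h3, h4, h5⟩ | ⟨h1, h2, h3⟩ | ⟨h1, h2, h3⟩
    · exact Or.inl ⟨h2, h1, h3, Or.inr ⟨h4, h5⟩⟩
    · exact Or.inr (Or.inr (Or.inl ⟨h1, h2, h3⟩))
    · exact Or.inr (Or.inr (Or.inr ⟨h2, h1, by omega⟩))

lemma T_disjoint (q : ℕ) (hq : 2 ≤ q) {k k' : Fin (q + 1)} (hkk : k ≠ k') :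
    Disjoint (T q hq k).edgeSet (T q hq k').edgeSet := by
  rw [Set.disjoint_left]
  intro e he he'
  induction e with
  | _ a b =>
    rw [SimpleGraph.mem_edgeSet] at he he'
    have hne : k.val ≠ k'.val := fun h => hkk (Fin.ext h)
    have hk := k.isLt
    have hk' := k'.isLt
    have h1 := adj_char q hq k he
    have h2 := adj_char q hq k' he'
    rcases h1 with ⟨a1, a2, a3, ⟨a4, a5⟩ | ⟨a4, a5⟩⟩ | ⟨a1, a2, a3⟩ | ⟨a1, a2, a3⟩ |
      ⟨a1, a2, a3 | a3 | a3 | a3⟩ <;>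
    rcases h2 with ⟨b1, b2, b3, ⟨b4, b5⟩ | ⟨b4, b5⟩⟩ | ⟨b1, b2, b3⟩ | ⟨b1, b2, b3⟩ |
      ⟨b1, b2, b3 | b3 | b3 | b3⟩ <;>
    omega

end Stmt5Aux

namespace Stmt5Aux

lemma adj_special (q : ℕ) (hq : 2 ≤ q) (s : ℕ) (hs : s < 3) (b : Fin (3 * (q + 1))) :
    (∃ k, (T q hq k).Adj ⟨s, by omega⟩ b) ↔
      (b.val = (s + 1) % 3 ∨ b.val = (s + 2) % 3 ∨
        (3 ≤ b.val ∧ b.val ≤ 3 + q ∧ b.val ≠ 3 + s)) := by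
  constructor
  · rintro ⟨k, hadj⟩
    have hk := k.isLt
    rcases adj_char q hq k hadj with ⟨a1, a2, a3, ⟨a4, a5⟩ | ⟨a4, a5⟩⟩ | ⟨a1, a2, a3⟩ |
      ⟨a1, a2, a3⟩ | ⟨a1, a2, a3⟩ <;>
    simp only [Fin.val_mk] at * <;> omega
  · intro hmem
    rcases hmem with hb | hb | hb
    · refine ⟨⟨s, by omega⟩, ?_⟩
      rw [T, SimpleGraph.fromRel_adj]
      refine ⟨fun h => by have := congrArg Fin.val h; simp only [Fin.val_mk] at this; omega,
        Or.inl ?_⟩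
      apply Fin.ext
      rw [par_val]
      simp only [Fin.val_mk]
      split_ifs <;> omega
    · refine ⟨⟨(s + 2) % 3, by omega⟩, ?_⟩
      rw [T, SimpleGraph.fromRel_adj]
      refine ⟨fun h => by have := congrArg Fin.val h; simp only [Fin.val_mk] at this; omega,
        Or.inr ?_⟩
      apply Fin.ext
      rw [par_val]
      simp only [Fin.val_mk]
      split_ifs <;> omega
    · refine ⟨⟨b.val - 3, by omega⟩, ?_⟩
      rw [T, SimpleGraph.fromRel_adj]
      refine ⟨fun h => by have := congrArg Fin.val h; simp only [Fin.val_mk] at this; omega,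
        Or.inl ?_⟩
      apply Fin.ext
      rw [par_val]
      simp only [Fin.val_mk]
      split_ifs <;> omega

end Stmt5Aux

namespace Stmt5Aux

def g (q s : ℕ) (hq : 2 ≤ q) (hs : s < 3) (j : Fin (q + 2)) : Fin (3 * (q + 1)) :=
  if j.val = 0 then ⟨(s + 1) % 3, by omega⟩
  else if j.val = 1 then ⟨(s + 2) % 3, by omega⟩
  else if j.val - 2 < s then ⟨3 + (j.val - 2), by have := j.isLt; omega⟩
  else ⟨3 + (j.val - 1), by have := j.isLt; omega⟩

lemma g_val (q s : ℕ) (hq : 2 ≤ q) (hs : s < 3) (j : Fin (q + 2)) :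
    (g q s hq hs j).val =
      if j.val = 0 then (s + 1) % 3
      else if j.val = 1 then (s + 2) % 3
      else if j.val - 2 < s then 3 + (j.val - 2)
      else 3 + (j.val - 1) := by
  unfold g; split_ifs <;> rfl

lemma g_inj (q s : ℕ) (hq : 2 ≤ q) (hs : s < 3) : Function.Injective (g q s hq hs) := by
  intro j j' h
  have hv := congrArg Fin.val h
  rw [g_val, g_val] at hv
  have := j.isLt; have := j'.isLt
  apply Fin.ext
  split_ifs at hv <;> omega

lemma g_range (q s : ℕ) (hq : 2 ≤ q) (hs : s < 3) (b : Fin (3 * (q + 1))) :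
    (∃ j, g q s hq hs j = b) ↔
      (b.val = (s + 1) % 3 ∨ b.val = (s + 2) % 3 ∨
        (3 ≤ b.val ∧ b.val ≤ 3 + q ∧ b.val ≠ 3 + s)) := by
  constructor
  · rintro ⟨j, rfl⟩
    rw [g_val]
    have := j.isLt
    split_ifs <;> omega
  · intro hb
    rcases hb with hb | hb | hb
    · exact ⟨⟨0, by omega⟩, Fin.ext (by rw [g_val]; simp only [Fin.val_mk]; split_ifs <;> first | omega | exact False.elim (by assumption))⟩
    · exact ⟨⟨1, by omega⟩, Fin.ext (by rw [g_val]; simp only [Fin.val_mk]; split_ifs <;> first | omega | exact False.elim (by assumption))⟩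
    · by_cases hc : b.val - 3 < s
      · exact ⟨⟨b.val - 1, by omega⟩, Fin.ext (by rw [g_val]; simp only [Fin.val_mk]; split_ifs <;> first | omega | exact False.elim (by assumption))⟩
      · exact ⟨⟨b.val - 2, by omega⟩, Fin.ext (by rw [g_val]; simp only [Fin.val_mk]; split_ifs <;> first | omega | exact False.elim (by assumption))⟩

lemma neighborSet_special (q : ℕ) (hq : 2 ≤ q) (s : ℕ) (hs : s < 3) :
    (⨆ k, T q hq k).neighborSet ⟨s, by omega⟩ = Set.range (g q s hq hs) := by
  ext b
  rw [SimpleGraph.mem_neighborSet, SimpleGraph.iSup_adj, adj_special q hq s hs b,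
    ← g_range q s hq hs b, Set.mem_range]

lemma ncard_neighborSet_special (q : ℕ) (hq : 2 ≤ q) (s : ℕ) (hs : s < 3) :
    ((⨆ k, T q hq k).neighborSet ⟨s, by omega⟩).ncard = q + 2 := by
  rw [neighborSet_special q hq s hs]
  rw [← Nat.card_coe_set_eq, Nat.card_range_of_injective (g_inj q s hq hs),
    Nat.card_eq_fintype_card, Fintype.card_fin]

end Stmt5Aux

/-- For every `q ≥ 2` there exists a graph `G` on `3(q+1)` vertices that is the
edge-disjoint union of `q+1` spanning trees and has three vertices `u₀, v₀, w₀`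
spanning a triangle, each of degree exactly `q+2` in `G`. -/
theorem stmt5 (q : ℕ) (hq : 2 ≤ q) :
    ∃ (G : SimpleGraph (Fin (3 * (q + 1))))
      (T : Fin (q + 1) → SimpleGraph (Fin (3 * (q + 1))))
      (u₀ v₀ w₀ : Fin (3 * (q + 1))),
      (∀ i, (T i).IsTree) ∧
      (Pairwise fun i j => Disjoint (T i).edgeSet (T j).edgeSet) ∧
      (⨆ i, T i) = G ∧
      u₀ ≠ v₀ ∧ v₀ ≠ w₀ ∧ u₀ ≠ w₀ ∧
      G.Adj u₀ v₀ ∧ G.Adj v₀ w₀ ∧ G.Adj u₀ w₀ ∧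
      (G.neighborSet u₀).ncard = q + 2 ∧
      (G.neighborSet v₀).ncard = q + 2 ∧
      (G.neighborSet w₀).ncard = q + 2 := by
  refine ⟨⨆ k, Stmt5Aux.T q hq k, Stmt5Aux.T q hq,
    ⟨0, by omega⟩, ⟨1, by omega⟩, ⟨2, by omega⟩,
    Stmt5Aux.T_isTree q hq, fun i j hij => Stmt5Aux.T_disjoint q hq hij, rfl,
    ?_, ?_, ?_, ?_, ?_, ?_, ?_, ?_, ?_⟩
  · intro h; have := congrArg Fin.val h; simp only [Fin.val_mk] at this; omega
  · intro h; have := congrArg Fin.val h; simp only [Fin.val_mk] at this; omega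
  · intro h; have := congrArg Fin.val h; simp only [Fin.val_mk] at this; omega
  · rw [SimpleGraph.iSup_adj]
    exact (Stmt5Aux.adj_special q hq 0 (by omega) ⟨1, by omega⟩).mpr
      (Or.inl rfl)
  · rw [SimpleGraph.iSup_adj]
    exact (Stmt5Aux.adj_special q hq 1 (by omega) ⟨2, by omega⟩).mpr
      (Or.inl rfl)
  · rw [SimpleGraph.iSup_adj]
    exact (Stmt5Aux.adj_special q hq 0 (by omega) ⟨2, by omega⟩).mpr
      (Or.inr (Or.inl rfl))
  · exact Stmt5Aux.ncard_neighborSet_special q hq 0 (by omega)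
  · exact Stmt5Aux.ncard_neighborSet_special q hq 1 (by omega)
  · exact Stmt5Aux.ncard_neighborSet_special q hq 2 (by omega)
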